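/- Let c > 0. In ℝ², let J be the 2×2 all-ones matrix, D₁ = diag(c+1, 1), D₂ = diag(1, c+1), Σ₁ = D₁ + J, Σ₂ = D₂ + J. Let q_{Σ₁} and q_{Σ₂} be top eigenvectors (eigenvectors of the largest eigenvalue) of Σ₁ and Σ₂ respectively. Then |cos(q_{Σ₁}, q_{Σ₂})| = 2/√(4 + c²). -/
import Mathlib


open Matrix

/-- Cosine similarity of two vectors in `ℝ^n` (with respect to the standard dot product). -/
noncomputable def cosSim {n : ℕ} (u v : Fin n → ℝ) : ℝ :=
  (u ⬝ᵥ v) / (Real.sqrt (u ⬝ᵥ u) * Real.sqrt (v ⬝ᵥ v))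

/-- For `c > 0`, `Σ₁ = diag(c+1, 1) + J` and `Σ₂ = diag(1, c+1) + J` in `ℝ²`,
if `q₁` and `q₂` are top eigenvectors (eigenvectors of the largest eigenvalue) of `Σ₁`, `Σ₂`
respectively, then `|cos(q₁, q₂)| = 2 / √(4 + c²)`. -/
theorem stmt4 (c : ℝ) (hc : 0 < c)
    (S₁ S₂ : Matrix (Fin 2) (Fin 2) ℝ)
    (hS₁ : S₁ = Matrix.diagonal ![c + 1, 1] + !![1, 1; 1, 1])
    (hS₂ : S₂ = Matrix.diagonal ![1, c + 1] + !![1, 1; 1, 1])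
    (q₁ q₂ : Fin 2 → ℝ) (l₁ l₂ : ℝ)
    (hq₁ : q₁ ≠ 0) (hq₂ : q₂ ≠ 0)
    (he₁ : S₁.mulVec q₁ = l₁ • q₁) (he₂ : S₂.mulVec q₂ = l₂ • q₂)
    (htop₁ : ∀ (μ : ℝ) (v : Fin 2 → ℝ), v ≠ 0 → S₁.mulVec v = μ • v → μ ≤ l₁)
    (htop₂ : ∀ (μ : ℝ) (v : Fin 2 → ℝ), v ≠ 0 → S₂.mulVec v = μ • v → μ ≤ l₂) :
    |cosSim q₁ q₂| = 2 / Real.sqrt (4 + c ^ 2) := by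
  set s := Real.sqrt (4 + c ^ 2) with hsdef
  have hs2 : s ^ 2 = 4 + c ^ 2 := Real.sq_sqrt (by positivity)
  have hs0 : 0 < s := Real.sqrt_pos.mpr (by positivity)
  have hsc : c < s := by nlinarith
  set lam : ℝ := (c + 4 + s) / 2 with hlam
  -- explicit top eigenvectors
  have hv1ne : (![2, s - c] : Fin 2 → ℝ) ≠ 0 := by
    intro h
    have := congrFun h 0
    simp at this
  have hv2ne : (![s - c, 2] : Fin 2 → ℝ) ≠ 0 := by
    intro h
    have := congrFun h 1
    simp at this
  have hev1 : S₁.mulVec ![2, s - c] = lam • ![2, s - c] := by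
    subst hS₁
    funext i
    fin_cases i <;>
      simp [Matrix.mulVec, dotProduct, Fin.sum_univ_two, Matrix.diagonal] <;>
      rw [hlam]
    · ring
    · linear_combination -hs2 / 2
  have hev2 : S₂.mulVec ![s - c, 2] = lam • ![s - c, 2] := by
    subst hS₂
    funext i
    fin_cases i <;>
      simp [Matrix.mulVec, dotProduct, Fin.sum_univ_two, Matrix.diagonal] <;>
      rw [hlam]
    · linear_combination -hs2 / 2
    · ring
  have hl1 : lam ≤ l₁ := htop₁ lam _ hv1ne hev1
  have hl2 : lam ≤ l₂ := htop₂ lam _ hv2ne hev2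
  -- component equations for q₁
  have a1 : (c + 2) * q₁ 0 + q₁ 1 = l₁ * q₁ 0 := by
    have := congrFun he₁ 0
    subst hS₁
    simp [Matrix.mulVec, dotProduct, Fin.sum_univ_two, Matrix.diagonal] at this
    linarith
  have a2 : q₁ 0 + 2 * q₁ 1 = l₁ * q₁ 1 := by
    have := congrFun he₁ 1
    subst hS₁
    simp [Matrix.mulVec, dotProduct, Fin.sum_univ_two, Matrix.diagonal] at this
    linarith
  have b1 : 2 * q₂ 0 + q₂ 1 = l₂ * q₂ 0 := by
    have := congrFun he₂ 0
    subst hS₂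
    simp [Matrix.mulVec, dotProduct, Fin.sum_univ_two, Matrix.diagonal] at this
    linarith
  have b2 : q₂ 0 + (c + 2) * q₂ 1 = l₂ * q₂ 1 := by
    have := congrFun he₂ 1
    subst hS₂
    simp [Matrix.mulVec, dotProduct, Fin.sum_univ_two, Matrix.diagonal] at this
    linarith
  have hx1 : q₁ 0 ≠ 0 := by
    intro h
    apply hq₁
    funext i
    have hy : q₁ 1 = 0 := by
      have := a1; rw [h] at this; linarith
    fin_cases i <;> simp [h, hy]
  have hx2 : q₂ 0 ≠ 0 := by
    intro h
    apply hq₂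
    funext i
    have hy : q₂ 1 = 0 := by
      have := b1; rw [h] at this; linarith
    fin_cases i <;> simp [h, hy]
  -- characteristic equation for l₁ and l₂
  have quad1 : (l₁ - lam) * (l₁ - (c + 4 - s) / 2) = 0 := by
    have key : (l₁ ^ 2 - (c + 4) * l₁ + (2 * c + 3)) * q₁ 0 = 0 := by
      have hy : q₁ 1 = (l₁ - c - 2) * q₁ 0 := by linarith
      rw [hy] at a2
      linear_combination -a2
    have h0 : l₁ ^ 2 - (c + 4) * l₁ + (2 * c + 3) = 0 :=
      by
        rcases mul_eq_zero.mp key with h | h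
        · exact h
        · exact absurd h hx1
    rw [hlam]
    linear_combination h0 - hs2 / 4
  have quad2 : (l₂ - lam) * (l₂ - (c + 4 - s) / 2) = 0 := by
    have key : (l₂ ^ 2 - (c + 4) * l₂ + (2 * c + 3)) * q₂ 0 = 0 := by
      have hy : q₂ 1 = (l₂ - 2) * q₂ 0 := by linarith
      rw [hy] at b2
      linear_combination -b2
    have h0 : l₂ ^ 2 - (c + 4) * l₂ + (2 * c + 3) = 0 :=
      by
        rcases mul_eq_zero.mp key with h | h
        · exact h
        · exact absurd h hx2
    rw [hlam]
    linear_combination h0 - hs2 / 4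
  have hl1e : l₁ = lam := by
    rcases mul_eq_zero.mp quad1 with h | h
    · linarith
    · exfalso; rw [hlam] at hl1; nlinarith
  have hl2e : l₂ = lam := by
    rcases mul_eq_zero.mp quad2 with h | h
    · linarith
    · exfalso; rw [hlam] at hl2; nlinarith
  -- eigenvector directions
  have hy1 : q₁ 1 = (s - c) / 2 * q₁ 0 := by
    rw [hl1e, hlam] at a1; linarith
  have hy2 : q₂ 1 = (s + c) / 2 * q₂ 0 := by
    rw [hl2e, hlam] at b1; linarith
  set a := q₁ 0
  set b := q₂ 0
  have hd : q₁ ⬝ᵥ q₂ = 2 * (a * b) := by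
    simp only [dotProduct, Fin.sum_univ_two, hy1, hy2]
    linear_combination a * b / 4 * hs2
  have h11 : q₁ ⬝ᵥ q₁ = a ^ 2 * (s * (s - c) / 2) := by
    simp only [dotProduct, Fin.sum_univ_two, hy1]
    linear_combination -(a ^ 2) / 4 * hs2
  have h22 : q₂ ⬝ᵥ q₂ = b ^ 2 * (s * (s + c) / 2) := by
    simp only [dotProduct, Fin.sum_univ_two, hy2]
    linear_combination -(b ^ 2) / 4 * hs2
  have h11nn : (0 : ℝ) ≤ q₁ ⬝ᵥ q₁ := by
    rw [h11]
    have h1 : (0 : ℝ) ≤ s * (s - c) / 2 := by nlinarith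
    exact mul_nonneg (sq_nonneg a) h1
  have hsqrt : Real.sqrt (q₁ ⬝ᵥ q₁) * Real.sqrt (q₂ ⬝ᵥ q₂) = |a * b| * s := by
    rw [← Real.sqrt_mul h11nn, h11, h22]
    have : a ^ 2 * (s * (s - c) / 2) * (b ^ 2 * (s * (s + c) / 2)) = (|a * b| * s) ^ 2 := by
      rw [mul_pow, sq_abs]
      linear_combination a ^ 2 * b ^ 2 * s ^ 2 / 4 * hs2
    rw [this]
    exact Real.sqrt_sq (by positivity)
  have hab : a * b ≠ 0 := mul_ne_zero hx1 hx2
  have h1 : |(2 : ℝ) * (a * b)| = 2 * |a * b| := by rw [abs_mul, abs_two]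
  have h2 : abs (|a * b| * s) = |a * b| * s := abs_of_pos (mul_pos (abs_pos.mpr hab) hs0)
  rw [cosSim, hd, hsqrt, abs_div, h1, h2, mul_comm (2 : ℝ) |a * b|,
    mul_div_mul_left _ _ (abs_ne_zero.mpr hab)]
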